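/- For every γ ∈ G(r,n), the generating function over colored sequences associated with γ satisfies Σ_{f ∈ N_0^{(r,n)}, π(f)=γ} t^{max(f)} q^{n·max(f) − |f|} = t^{des_G(γ)} q^{maj(γ)} / ((1−t)(1−tq)···(1−tq^{n−1})) as an identity of formal power series in t and q. -/

import Mathlib

open Finset

namespace Paper

/-- An element of `G(r,n) = ℤ_r ≀ S_n`: a pair (underlying permutation, color vector). -/
abbrev CPerm (r n : ℕ) := Equiv.Perm (Fin n) × (Fin n → Fin r)

/-- A colored sequence: values and colors. -/
abbrev CSeq (r n : ℕ) := (Fin n → ℕ) × (Fin n → Fin r)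

variable {r n : ℕ}

/-- The order on colored integers (value, color):
`n^{r-1} < ⋯ < n^1 < ⋯ < 1^{r-1} < ⋯ < 1^1 < 0 < 1 < ⋯ < n`.
`clt a b` means `a < b`. -/
def clt (a b : ℕ × ℕ) : Prop :=
  (0 < a.2 ∧ b.2 = 0) ∨
  (0 < a.2 ∧ 0 < b.2 ∧ (b.1 < a.1 ∨ (a.1 = b.1 ∧ b.2 < a.2))) ∨
  (a.2 = 0 ∧ b.2 = 0 ∧ a.1 < b.1)

instance (a b : ℕ × ℕ) : Decidable (clt a b) := by unfold clt; exact inferInstance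

/-- The colored entry of `γ` at (0-based) position `i`: value `σ(i)` (1-based) with its color. -/
def entry (γ : CPerm r n) (i : Fin n) : ℕ × ℕ := ((γ.1 i : ℕ) + 1, (γ.2 i : ℕ))

/-- Window value `γ(i)` for `i ∈ [0,n]` (1-based positions), with `γ(0) := 0`. -/
def wval (γ : CPerm r n) (i : ℕ) : ℕ × ℕ :=
  if h : 1 ≤ i ∧ i ≤ n then ((γ.1 ⟨i - 1, by omega⟩ : ℕ) + 1, (γ.2 ⟨i - 1, by omega⟩ : ℕ))
  else (0, 0)

/-- Descent set `Des_G(γ) = {i ∈ [0,n-1] : γ(i) > γ(i+1)}`, with `γ(0) := 0`. -/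
def DesG (γ : CPerm r n) : Finset ℕ :=
  (range n).filter fun i => clt (wval γ (i + 1)) (wval γ i)

def desG (γ : CPerm r n) : ℕ := (DesG γ).card

def majG (γ : CPerm r n) : ℕ := ∑ i ∈ DesG γ, i

def colG (γ : CPerm r n) : ℕ := ∑ i, (γ.2 i : ℕ)

/-- Number of inversions: pairs `i < j` with `γ(i) > γ(j)` in the colored order. -/
def invG (γ : CPerm r n) : ℕ :=
  ((univ : Finset (Fin n × Fin n)).filter fun p =>
    p.1 < p.2 ∧ clt (entry γ p.2) (entry γ p.1)).card

/-- Length `ℓ_G(γ) = inv(γ) + Σ_{c_i ≠ 0} (σ(i) + c_i - 1)` (σ(i) 1-based). -/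
def lenG (γ : CPerm r n) : ℕ :=
  invG γ + ∑ i ∈ univ.filter (fun i => (γ.2 i : ℕ) ≠ 0), ((γ.1 i : ℕ) + (γ.2 i : ℕ))

/-- Membership in `N_0^{(r,n)}`: a zero value has color 0. -/
def ValidSeq (f : CSeq r n) : Prop := ∀ i, f.1 i = 0 → (f.2 i : ℕ) = 0

/-- The defining property of `π(f) = γ = (c;σ)`:
`f_{σ(1)} ≤ … ≤ f_{σ(n)}`, `c_i(γ) = c_{σ(i)}(f)`, and `γ(i) < γ(i+1)` whenever
`f_{σ(i)} = f_{σ(i+1)}`. -/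
def isPi (f : CSeq r n) (γ : CPerm r n) : Prop :=
  (∀ i j : Fin n, i ≤ j → f.1 (γ.1 i) ≤ f.1 (γ.1 j)) ∧
  (∀ i, γ.2 i = f.2 (γ.1 i)) ∧
  (∀ i j : Fin n, (i : ℕ) + 1 = (j : ℕ) → f.1 (γ.1 i) = f.1 (γ.1 j) →
    clt (entry γ i) (entry γ j))

def maxf (f : CSeq r n) : ℕ := univ.sup f.1

def sumf (f : CSeq r n) : ℕ := ∑ i, f.1 i

/-- The partition `λ(f)` (relative to `γ = π(f)`), with values in `ℤ`:
`λ_i = f_{σ(i)} - #{j ∈ Des_G(γ) : j ≤ i-1}` (1-based `i`). -/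
def lamZ (f : CSeq r n) (γ : CPerm r n) (i : Fin n) : ℤ :=
  (f.1 (γ.1 i) : ℤ) - ((DesG γ).filter (· ≤ (i : ℕ))).card

/-- 1-based reading of an `n`-tuple, with value `0` at index `0` (and outside `[1,n]`). -/
def mval (μ : Fin n → ℕ) (i : ℕ) : ℕ :=
  if h : 1 ≤ i ∧ i ≤ n then μ ⟨i - 1, by omega⟩ else 0

/-- `μ` is `γ`-compatible: `μ_i < μ_{i+1}` for all `i ∈ Des_G(γ)` (with `μ_0 := 0`). -/
def compat (μ : Fin n → ℕ) (γ : CPerm r n) : Prop :=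
  ∀ i ∈ DesG γ, mval μ i < mval μ (i + 1)

/-- The skew inverse `γ̃⁻¹ = (c_{σ⁻¹(1)},…,c_{σ⁻¹(n)}; σ⁻¹)`. -/
def skewInv (γ : CPerm r n) : CPerm r n := (γ.1⁻¹, fun i => γ.2 (γ.1⁻¹ i))

/-- The group inverse: `γ⁻¹ = (c'; σ⁻¹)` with `c'_i = (r - c_{σ⁻¹(i)}) mod r`. -/
def cinv (γ : CPerm r n) : CPerm r n :=
  (γ.1⁻¹, fun i =>
    ⟨(r - (γ.2 (γ.1⁻¹ i) : ℕ)) % r,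
      Nat.mod_lt _ (Nat.lt_of_le_of_lt (Nat.zero_le _) (γ.2 (γ.1⁻¹ i)).isLt)⟩)

/-- The group law of `G(r,n)`: `(c;σ)·(d;τ) = ((d_i + c_{τ(i)}) mod r; στ)`. -/
def cmul (x y : CPerm r n) : CPerm r n :=
  (x.1 * y.1, fun i =>
    ⟨((y.2 i : ℕ) + (x.2 (y.1 i) : ℕ)) % r,
      Nat.mod_lt _ (Nat.lt_of_le_of_lt (Nat.zero_le _) (y.2 i).isLt)⟩)

/-- The color-forgetting projection `φ : G(r,n) → B_n = G(2,n)`. -/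
def phi (γ : CPerm r n) : CPerm 2 n := (γ.1, fun i => ⟨min (γ.2 i : ℕ) 1, by omega⟩)

/-- `[m]_p = 1 + p + ⋯ + p^{m-1}`. -/
def qint {R : Type*} [CommRing R] (p : R) (m : ℕ) : R := ∑ j ∈ range m, p ^ j

/-- `[m]_p! = [1]_p [2]_p ⋯ [m]_p`. -/
def qfact {R : Type*} [CommRing R] (p : R) (m : ℕ) : R := ∏ j ∈ range m, qint p (j + 1)

/-- `[m̂]_{b,p}! = (1+bp)(1+bp²)⋯(1+bp^m)·[m]_p!`. -/
def hqfact {R : Type*} [CommRing R] (b p : R) (m : ℕ) : R :=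
  (∏ i ∈ range m, (1 + b * p ^ (i + 1))) * qfact p m

/-- A formal power series in two variables `X 0, X 1` from its coefficients. -/
def seriesOf2 (F : ℕ → ℕ → ℚ) : MvPowerSeries (Fin 2) ℚ := fun d => F (d 0) (d 1)

/-- A formal power series in three variables from its coefficients. -/
def seriesOf3 (F : ℕ → ℕ → ℕ → ℚ) : MvPowerSeries (Fin 3) ℚ := fun d => F (d 0) (d 1) (d 2)


/-! ### Auxiliary lemmas for the proof of `stmt4` -/

section Aux

lemma clt_asymm {a b : ℕ × ℕ} (h : clt a b) : ¬ clt b a := by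
  unfold clt at *; omega

lemma clt_total {a b : ℕ × ℕ} (h : a.1 ≠ b.1) : clt a b ∨ clt b a := by
  unfold clt; omega

lemma clt_color {a b : ℕ × ℕ} (h : clt a b) (ha : a.2 = 0) : b.2 = 0 := by
  unfold clt at h; omega

lemma wval_zero' (γ : CPerm r n) : wval γ 0 = (0,0) := by simp [wval]

lemma wval_succ (γ : CPerm r n) (i : Fin n) : wval γ ((i:ℕ)+1) = entry γ i := by
  have h : 1 ≤ (i:ℕ)+1 ∧ (i:ℕ)+1 ≤ n := ⟨by omega, i.isLt⟩
  simp [wval, entry, h]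

lemma DesG_subset (γ : CPerm r n) : DesG γ ⊆ range n := filter_subset _ _

lemma mem_DesG_zero (γ : CPerm r n) (h0 : 0 < n) :
    0 ∈ DesG γ ↔ 0 < (γ.2 ⟨0, h0⟩ : ℕ) := by
  have h : wval γ (0+1) = entry γ ⟨0, h0⟩ := wval_succ γ ⟨0, h0⟩
  rw [DesG, mem_filter, mem_range, h, wval_zero']
  simp [clt, entry]
  omega

lemma mem_DesG_succ (γ : CPerm r n) (i : ℕ) (h1 : i+1 < n) :
    (i+1) ∈ DesG γ ↔ clt (entry γ ⟨i+1, h1⟩) (entry γ ⟨i, by omega⟩) := by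
  have e2 : wval γ (i+1+1) = entry γ ⟨i+1, h1⟩ := wval_succ γ ⟨i+1, h1⟩
  have e1 : wval γ (i+1) = entry γ ⟨i, by omega⟩ := wval_succ γ ⟨i, by omega⟩
  rw [DesG, mem_filter, mem_range, e2, e1]
  exact ⟨fun h => h.2, fun h => ⟨h1, h⟩⟩

lemma entry_fst_ne (γ : CPerm r n) {i j : Fin n} (h : i ≠ j) :
    (entry γ i).1 ≠ (entry γ j).1 := by
  simp only [entry]
  intro hc
  exact h (γ.1.injective (Fin.val_injective (by omega)))

/-- The increasing sequence built from a tuple `b` of gaps and the descent set. -/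
def Lfun0 (D : Finset ℕ) (b : Fin n → ℕ) (i : Fin n) : ℕ :=
  (∑ j ∈ univ.filter (· ≤ i), b j) + (D.filter (· ≤ (i:ℕ))).card

lemma card_filter_le_nat (k : ℕ) :
    (univ.filter fun i : Fin n => k ≤ (i:ℕ)).card = n - k := by
  rw [Finset.card_filter]
  rw [Fin.sum_univ_eq_sum_range (fun i => if k ≤ i then 1 else 0)]
  rw [← Finset.card_filter]
  have h : (range n).filter (fun i => k ≤ i) = Finset.Ico k n := by
    ext j; simp only [mem_filter, mem_range, mem_Ico]; omega
  rw [h, Nat.card_Ico]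

variable (DesGx : Finset ℕ)

lemma Lfun0_zero (h0 : 0 < n) (b : Fin n → ℕ) :
    Lfun0 DesGx b ⟨0, h0⟩ = b ⟨0, h0⟩ + (if 0 ∈ DesGx then 1 else 0) := by
  unfold Lfun0
  have h1 : univ.filter (· ≤ (⟨0, h0⟩ : Fin n)) = {(⟨0, h0⟩ : Fin n)} := by
    ext j; simp [Fin.le_def, Fin.ext_iff]
  have h2 : DesGx.filter (· ≤ (0:ℕ)) = DesGx.filter (· = (0:ℕ)) := by
    ext j; simp
  rw [h1, h2, Finset.filter_eq', sum_singleton]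
  split_ifs <;> simp

lemma Lfun0_succ (b : Fin n → ℕ) (i : ℕ) (h : i + 1 < n) :
    Lfun0 DesGx b ⟨i+1, h⟩ =
      Lfun0 DesGx b ⟨i, by omega⟩ + b ⟨i+1, h⟩ + (if i+1 ∈ DesGx then 1 else 0) := by
  unfold Lfun0
  have h1 : univ.filter (· ≤ (⟨i+1, h⟩ : Fin n)) =
      insert (⟨i+1, h⟩ : Fin n) (univ.filter (· ≤ (⟨i, by omega⟩ : Fin n))) := by
    ext j; simp [Fin.le_def, Fin.ext_iff]; omega
  have h2 : DesGx.filter (· ≤ (i+1:ℕ)) =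
      (DesGx.filter (· ≤ (i:ℕ))) ∪ (DesGx.filter (· = (i+1:ℕ))) := by
    ext j
    simp only [mem_filter, mem_union, ← and_or_left]
    rw [and_congr_right_iff]; intro _; omega
  have h3 : Disjoint (DesGx.filter (· ≤ (i:ℕ))) (DesGx.filter (· = (i+1:ℕ))) := by
    simp [disjoint_left, mem_filter]; omega
  have h4 : (⟨i+1, h⟩ : Fin n) ∉ univ.filter (· ≤ (⟨i, by omega⟩ : Fin n)) := by
    simp [Fin.le_def]
  rw [h1, h2, sum_insert h4, card_union_of_disjoint h3, Finset.filter_eq']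
  split_ifs <;> simp <;> ring

lemma Lfun0_mono (b : Fin n → ℕ) : Monotone (Lfun0 DesGx b) := by
  intro i j hij
  unfold Lfun0
  apply Nat.add_le_add
  · apply sum_le_sum_of_subset
    intro x hx; simp only [mem_filter, mem_univ, true_and] at *; exact le_trans hx hij
  · apply card_le_card
    intro x hx; simp only [mem_filter] at *
    exact ⟨hx.1, le_trans hx.2 (Fin.le_def.mp hij)⟩

lemma Lfun0_top (hD : DesGx ⊆ range n) (h0 : 0 < n) (b : Fin n → ℕ) :
    Lfun0 DesGx b ⟨n-1, by omega⟩ = (∑ j, b j) + DesGx.card := by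
  unfold Lfun0
  have h1 : univ.filter (· ≤ (⟨n-1, by omega⟩ : Fin n)) = univ := by
    ext j; simp [Fin.le_def]; omega
  have h2 : DesGx.filter (· ≤ (n-1:ℕ)) = DesGx := by
    apply filter_true_of_mem
    intro k hk; have := mem_range.mp (hD hk); omega
  rw [h1, h2]

lemma Lfun0_sup (hD : DesGx ⊆ range n) (b : Fin n → ℕ) :
    univ.sup (Lfun0 DesGx b) = (∑ j, b j) + DesGx.card := by
  rcases Nat.eq_zero_or_pos n with h0 | h0
  · subst h0
    simp only [univ_eq_empty, sup_empty, Finset.sum_empty]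
    have h : DesGx = ∅ := subset_empty.mp (by simpa using hD)
    simp [h]
  · apply le_antisymm
    · apply Finset.sup_le
      intro i _
      rw [← Lfun0_top DesGx hD h0 b]
      exact Lfun0_mono DesGx b (by simp [Fin.le_def]; omega)
    · rw [← Lfun0_top DesGx hD h0 b]
      exact Finset.le_sup (mem_univ _)

lemma Lfun0_sum (hD : DesGx ⊆ range n) (b : Fin n → ℕ) :
    (∑ i, Lfun0 DesGx b i) + ((∑ i : Fin n, (i:ℕ) * b i) + ∑ k ∈ DesGx, k) =
      n * ((∑ j, b j) + DesGx.card) := by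
  unfold Lfun0
  rw [Finset.sum_add_distrib]
  have hA : (∑ i : Fin n, ∑ j ∈ univ.filter (· ≤ i), b j)
      = ∑ j : Fin n, (n - (j:ℕ)) * b j := by
    have hfilter : ∀ i : Fin n, univ.filter (· ≤ i) =
        univ.filter (fun j : Fin n => (j:ℕ) ≤ (i:ℕ)) :=
      fun i => filter_congr (fun j _ => Fin.le_def)
    simp only [hfilter]
    have hsf : ∀ i : Fin n, (∑ j ∈ univ.filter (fun j : Fin n => (j:ℕ) ≤ (i:ℕ)), b j)
        = ∑ j : Fin n, if (j:ℕ) ≤ (i:ℕ) then b j else 0 := fun i => Finset.sum_filter _ _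
    simp only [hsf]
    rw [Finset.sum_comm]
    refine Finset.sum_congr rfl fun j _ => ?_
    rw [← Finset.sum_filter, Finset.sum_const, smul_eq_mul, card_filter_le_nat]
  have hB : (∑ i : Fin n, (DesGx.filter (· ≤ (i:ℕ))).card)
      = ∑ k ∈ DesGx, (n - k) := by
    have h : ∀ i : Fin n, (DesGx.filter (· ≤ (i:ℕ))).card
        = ∑ k ∈ DesGx, if k ≤ (i:ℕ) then 1 else 0 := by
      intro i; rw [← Finset.sum_filter, Finset.sum_const, smul_eq_mul, mul_one]
    simp only [h]
    rw [Finset.sum_comm]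
    refine Finset.sum_congr rfl fun k _ => ?_
    rw [← Finset.sum_filter, Finset.sum_const, smul_eq_mul, mul_one, card_filter_le_nat]
  rw [hA, hB]
  have e1 : (∑ j : Fin n, (n - (j:ℕ)) * b j) + (∑ i : Fin n, (i:ℕ) * b i)
      = n * ∑ j, b j := by
    rw [← Finset.sum_add_distrib, Finset.mul_sum]
    refine Finset.sum_congr rfl fun j _ => ?_
    rw [← Nat.add_mul, Nat.sub_add_cancel (le_of_lt j.isLt)]
  have e2 : (∑ k ∈ DesGx, (n - k)) + (∑ k ∈ DesGx, k) = n * DesGx.card := by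
    rw [← Finset.sum_add_distrib]
    have h : ∀ k ∈ DesGx, (n - k) + k = n := by
      intro k hk; have := mem_range.mp (hD hk); omega
    rw [Finset.sum_congr rfl h, Finset.sum_const, smul_eq_mul, mul_comm]
  calc (∑ j : Fin n, (n - (j:ℕ)) * b j) + (∑ k ∈ DesGx, (n-k))
        + ((∑ i : Fin n, (i:ℕ) * b i) + ∑ k ∈ DesGx, k)
      = ((∑ j : Fin n, (n - (j:ℕ)) * b j) + (∑ i : Fin n, (i:ℕ) * b i))
        + ((∑ k ∈ DesGx, (n-k)) + (∑ k ∈ DesGx, k)) := by ring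
    _ = n * ∑ j, b j + n * DesGx.card := by rw [e1, e2]
    _ = n * ((∑ j, b j) + DesGx.card) := by ring

end Aux

section Aux2

/-- The candidate sequence associated to a gap tuple `b`. -/
def Phi (γ : CPerm r n) (b : Fin n → ℕ) : CSeq r n :=
  (fun x => Lfun0 (DesG γ) b (γ.1⁻¹ x), fun x => γ.2 (γ.1⁻¹ x))

lemma Phi_fst (γ : CPerm r n) (b : Fin n → ℕ) (i : Fin n) :
    (Phi γ b).1 (γ.1 i) = Lfun0 (DesG γ) b i := by
  simp [Phi]

lemma Phi_snd (γ : CPerm r n) (b : Fin n → ℕ) (i : Fin n) :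
    (Phi γ b).2 (γ.1 i) = γ.2 i := by
  simp [Phi]

lemma colors_zero (γ : CPerm r n) :
    ∀ m (hm : m < n), (∀ k ≤ m, k ∉ DesG γ) → (γ.2 ⟨m, hm⟩ : ℕ) = 0 := by
  intro m
  induction m with
  | zero =>
    intro hm h
    have h0 := h 0 le_rfl
    rw [mem_DesG_zero γ hm] at h0
    omega
  | succ m ih =>
    intro hm h
    have hcm : (γ.2 ⟨m, by omega⟩ : ℕ) = 0 := ih (by omega) (fun k hk => h k (by omega))
    have hnd := h (m+1) le_rfl
    rw [mem_DesG_succ γ m hm] at hnd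
    have hne : (⟨m, by omega⟩ : Fin n) ≠ ⟨m+1, hm⟩ := by simp [Fin.ext_iff]
    have htot := clt_total (entry_fst_ne γ hne)
    have hclt : clt (entry γ ⟨m, by omega⟩) (entry γ ⟨m+1, hm⟩) := htot.resolve_right hnd
    have := clt_color hclt (by simpa [entry] using hcm)
    simpa [entry] using this

lemma Phi_valid (γ : CPerm r n) (b : Fin n → ℕ) : ValidSeq (Phi γ b) := by
  intro x hx
  set i := γ.1⁻¹ x with hi
  have hx' : Lfun0 (DesG γ) b i = 0 := hx
  have hcard : ((DesG γ).filter (· ≤ (i:ℕ))).card = 0 := by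
    unfold Lfun0 at hx'; omega
  have hnone : ∀ k ≤ (i:ℕ), k ∉ DesG γ := by
    intro k hk hmem
    have : k ∈ (DesG γ).filter (· ≤ (i:ℕ)) := mem_filter.mpr ⟨hmem, hk⟩
    rw [card_eq_zero.mp hcard] at this
    exact absurd this (notMem_empty _)
  have := colors_zero γ (i:ℕ) i.isLt hnone
  show (γ.2 i : ℕ) = 0; exact this

lemma Phi_isPi (γ : CPerm r n) (b : Fin n → ℕ) : isPi (Phi γ b) γ := by
  refine ⟨?_, ?_, ?_⟩
  · intro i j hij
    rw [Phi_fst, Phi_fst]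
    exact Lfun0_mono (DesG γ) b hij
  · intro i; rw [Phi_snd]
  · intro i j hij heq
    rw [Phi_fst, Phi_fst] at heq
    have hjlt : (i:ℕ) + 1 < n := by omega
    have hieq : (⟨(i:ℕ), by omega⟩ : Fin n) = i := by simp
    have hjeq : (⟨(i:ℕ)+1, hjlt⟩ : Fin n) = j := by simp [Fin.ext_iff]; omega
    have hsucc := Lfun0_succ (DesG γ) b (i:ℕ) hjlt
    rw [hieq, hjeq] at hsucc
    have hnd : ((i:ℕ)+1) ∉ DesG γ := by
      intro hmem
      rw [hsucc] at heq
      simp [hmem] at heq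
      omega
    rw [mem_DesG_succ γ (i:ℕ) hjlt] at hnd
    rw [hieq, hjeq] at hnd
    have hne : i ≠ j := by intro h; rw [h] at hij; omega
    have htot := clt_total (entry_fst_ne γ hne)
    exact htot.resolve_right hnd

lemma Phi_maxf (γ : CPerm r n) (b : Fin n → ℕ) :
    maxf (Phi γ b) = (∑ j, b j) + desG γ := by
  have h : maxf (Phi γ b) = univ.sup (Lfun0 (DesG γ) b) := by
    unfold maxf
    apply le_antisymm
    · apply Finset.sup_le
      intro x _
      exact Finset.le_sup (f := Lfun0 (DesG γ) b) (mem_univ (γ.1⁻¹ x))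
    · apply Finset.sup_le
      intro i _
      have := Finset.le_sup (f := (Phi γ b).1) (mem_univ (γ.1 i))
      rwa [Phi_fst] at this
  rw [h, Lfun0_sup (DesG γ) (DesG_subset γ) b]
  rfl

lemma Phi_sumf (γ : CPerm r n) (b : Fin n → ℕ) :
    sumf (Phi γ b) + ((∑ i : Fin n, (i:ℕ) * b i) + majG γ) =
      n * ((∑ j, b j) + desG γ) := by
  have h : sumf (Phi γ b) = ∑ i, Lfun0 (DesG γ) b i := by
    unfold sumf
    rw [← Equiv.sum_comp γ.1 (Phi γ b).1]
    exact Finset.sum_congr rfl fun i _ => Phi_fst γ b i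
  rw [h]
  exact Lfun0_sum (DesG γ) (DesG_subset γ) b

lemma Phi_inj (γ : CPerm r n) : Function.Injective (Phi γ) := by
  intro b b' h
  have hL : ∀ i : Fin n, Lfun0 (DesG γ) b i = Lfun0 (DesG γ) b' i := by
    intro i
    have := congrFun (congrArg Prod.fst h) (γ.1 i)
    rwa [Phi_fst, Phi_fst] at this
  funext i
  rcases i with ⟨m, hm⟩
  cases m with
  | zero =>
    have h0 := hL ⟨0, hm⟩
    rw [Lfun0_zero (DesG γ) hm b, Lfun0_zero (DesG γ) hm b'] at h0
    omega
  | succ m =>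
    have h1 := hL ⟨m+1, hm⟩
    have h2 := hL ⟨m, by omega⟩
    rw [Lfun0_succ (DesG γ) b m hm, Lfun0_succ (DesG γ) b' m hm] at h1
    omega

lemma Phi_surj (γ : CPerm r n) (f : CSeq r n) (hv : ValidSeq f) (hpi : isPi f γ) :
    ∃ b : Fin n → ℕ, Phi γ b = f := by
  set lam : Fin n → ℕ := fun i => f.1 (γ.1 i) with hlam
  have F1 : ∀ (m : ℕ) (h : m + 1 < n), lam ⟨m, by omega⟩ ≤ lam ⟨m+1, h⟩ := by
    intro m h
    exact hpi.1 ⟨m, by omega⟩ ⟨m+1, h⟩ (by simp [Fin.le_def])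
  have F2 : ∀ (m : ℕ) (h : m + 1 < n), (m+1) ∈ DesG γ →
      lam ⟨m, by omega⟩ < lam ⟨m+1, h⟩ := by
    intro m h hmem
    rcases Nat.lt_or_ge (lam ⟨m, by omega⟩) (lam ⟨m+1, h⟩) with hlt | hge
    · exact hlt
    · exfalso
      have heq : lam ⟨m, by omega⟩ = lam ⟨m+1, h⟩ :=
        le_antisymm (F1 m h) hge
      have hclt := hpi.2.2 ⟨m, by omega⟩ ⟨m+1, h⟩ rfl heq
      rw [mem_DesG_succ γ m h] at hmem
      exact clt_asymm hclt hmem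
  have F3 : 0 < n → 0 ∈ DesG γ → ∀ h0 : 0 < n, 1 ≤ lam ⟨0, h0⟩ := by
    intro hn hmem h0
    rw [mem_DesG_zero γ h0] at hmem
    by_contra hc
    have hz : lam ⟨0, h0⟩ = 0 := by omega
    have := hv (γ.1 ⟨0, h0⟩) hz
    rw [← hpi.2.1 ⟨0, h0⟩] at this
    omega
  set b : Fin n → ℕ := fun i =>
    if h0 : (i:ℕ) = 0 then lam i - (if 0 ∈ DesG γ then 1 else 0)
    else lam i - lam ⟨(i:ℕ)-1, by omega⟩ - (if (i:ℕ) ∈ DesG γ then 1 else 0) with hb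
  have key : ∀ (m : ℕ) (hm : m < n), Lfun0 (DesG γ) b ⟨m, hm⟩ = lam ⟨m, hm⟩ := by
    intro m
    induction m with
    | zero =>
      intro hm
      rw [Lfun0_zero (DesG γ) hm b]
      have hb0 : b ⟨0, hm⟩ = lam ⟨0, hm⟩ - (if 0 ∈ DesG γ then 1 else 0) := by
        rw [hb]; simp
      rw [hb0]
      split_ifs with hd
      · have := F3 hm hd hm; omega
      · omega
    | succ m ih =>
      intro hm
      rw [Lfun0_succ (DesG γ) b m hm, ih (by omega)]
      have hbm : b ⟨m+1, hm⟩ = lam ⟨m+1, hm⟩ - lam ⟨m, by omega⟩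
          - (if (m+1) ∈ DesG γ then 1 else 0) := by
        rw [hb]; simp
      rw [hbm]
      have hmono := F1 m hm
      split_ifs with hd
      · have := F2 m hm hd; omega
      · omega
  have keyi : ∀ i : Fin n, Lfun0 (DesG γ) b i = lam i := fun i => by
    have := key (i:ℕ) i.isLt
    simpa using this
  refine ⟨b, Prod.ext ?_ ?_⟩
  · funext x
    show Lfun0 (DesG γ) b (γ.1⁻¹ x) = f.1 x
    rw [keyi]
    simp only [hlam]
    simp
  · funext x
    show γ.2 (γ.1⁻¹ x) = f.2 x
    rw [hpi.2.1 (γ.1⁻¹ x)]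
    simp

/-- The set of gap tuples with prescribed statistics. -/
def Bfin (γ : CPerm r n) (k m : ℕ) : Finset (Fin n → ℕ) :=
  (Fintype.piFinset fun _ : Fin n => range (k+1)).filter
    fun b => (∑ i, b i) + desG γ = k ∧ (∑ i : Fin n, (i:ℕ) * b i) + majG γ = m

lemma mem_Bfin {γ : CPerm r n} {k m : ℕ} {b : Fin n → ℕ} :
    b ∈ Bfin γ k m ↔
      (∑ i, b i) + desG γ = k ∧ (∑ i : Fin n, (i:ℕ) * b i) + majG γ = m := by
  unfold Bfin
  rw [mem_filter, and_iff_right_iff_imp]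
  intro hcond
  rw [Fintype.mem_piFinset]
  intro i
  rw [mem_range]
  have h := Finset.single_le_sum (f := b) (fun j _ => Nat.zero_le _) (mem_univ i)
  omega

lemma ncard_S (γ : CPerm r n) (k m : ℕ) :
    {f : CSeq r n | ValidSeq f ∧ isPi f γ ∧ maxf f = k ∧ n * k - sumf f = m}.ncard
      = (Bfin γ k m).card := by
  have hset : {f : CSeq r n | ValidSeq f ∧ isPi f γ ∧ maxf f = k ∧ n * k - sumf f = m}
      = Phi γ '' ↑(Bfin γ k m) := by
    ext f
    simp only [Set.mem_setOf_eq, Set.mem_image, mem_coe]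
    constructor
    · rintro ⟨hv, hpi, hk, hm⟩
      obtain ⟨b, rfl⟩ := Phi_surj γ f hv hpi
      refine ⟨b, ?_, rfl⟩
      rw [mem_Bfin]
      have h1 := Phi_maxf γ b
      have h2 := Phi_sumf γ b
      have hks : (∑ j, b j) + desG γ = k := by omega
      rw [hks] at h2
      refine ⟨hks, ?_⟩
      generalize hnk : n * k = nk at h2 hm
      omega
    · rintro ⟨b, hb, rfl⟩
      rw [mem_Bfin] at hb
      have h1 := Phi_maxf γ b
      have h2 := Phi_sumf γ b
      rw [hb.1] at h2
      refine ⟨Phi_valid γ b, Phi_isPi γ b, by omega, ?_⟩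
      have hb2 := hb.2
      generalize hnk : n * k = nk at h2 ⊢
      omega
  rw [hset, Set.ncard_image_of_injective _ (Phi_inj γ), Set.ncard_coe_finset]

end Aux2

section Aux3

/-- Geometric series `∑_b (X 0 * X 1 ^ i)^b`. -/
def G2 (i : ℕ) : MvPowerSeries (Fin 2) ℚ :=
  seriesOf2 fun k m => if m = i * k then 1 else 0

lemma coeff_G2 (i : ℕ) (d : Fin 2 →₀ ℕ) :
    MvPowerSeries.coeff d (G2 i) = if d 1 = i * d 0 then 1 else 0 := rfl

/-- The exponent vector `(a, b)` in `Fin 2 →₀ ℕ`. -/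
noncomputable def e2 (a b : ℕ) : Fin 2 →₀ ℕ := Finsupp.single 0 a + Finsupp.single 1 b

lemma e2_apply0 (a b : ℕ) : e2 a b 0 = a := by
  simp [e2, Finsupp.single_apply]

lemma e2_apply1 (a b : ℕ) : e2 a b 1 = b := by
  simp [e2, Finsupp.single_apply]

lemma fin2_eq (u : Fin 2 →₀ ℕ) : u = e2 (u 0) (u 1) := by
  ext s
  fin_cases s
  · simp [e2_apply0]
  · simp [e2_apply1]

lemma e2_le_iff (a b : ℕ) (d : Fin 2 →₀ ℕ) : e2 a b ≤ d ↔ a ≤ d 0 ∧ b ≤ d 1 := by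
  rw [Finsupp.le_def, Fin.forall_fin_two, e2_apply0, e2_apply1]

lemma Xpow_mul_Xpow (a b : ℕ) :
    (MvPowerSeries.X 0 : MvPowerSeries (Fin 2) ℚ) ^ a * MvPowerSeries.X 1 ^ b
      = MvPowerSeries.monomial (e2 a b) 1 := by
  rw [MvPowerSeries.X_pow_eq, MvPowerSeries.X_pow_eq, MvPowerSeries.monomial_mul_monomial,
    one_mul]
  rfl

lemma G2_mul (i : ℕ) :
    G2 i * (1 - MvPowerSeries.X 0 * MvPowerSeries.X 1 ^ i) = 1 := by
  have hS : (MvPowerSeries.X 0 : MvPowerSeries (Fin 2) ℚ) * MvPowerSeries.X 1 ^ i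
      = MvPowerSeries.monomial (e2 1 i) 1 := by
    have h := Xpow_mul_Xpow 1 i; rwa [pow_one] at h
  have key : G2 i * (MvPowerSeries.X 0 * MvPowerSeries.X 1 ^ i) = G2 i - 1 := by
    rw [hS]
    apply MvPowerSeries.ext; intro d
    rw [MvPowerSeries.coeff_mul_monomial, map_sub, coeff_G2, MvPowerSeries.coeff_one]
    by_cases hle : e2 1 i ≤ d
    · rw [if_pos hle, coeff_G2, mul_one]
      rw [e2_le_iff] at hle
      obtain ⟨hle0, hle1⟩ := hle
      have h0 : (d - e2 1 i) 0 = d 0 - 1 := by rw [Finsupp.tsub_apply, e2_apply0]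
      have h1 : (d - e2 1 i) 1 = d 1 - i := by rw [Finsupp.tsub_apply, e2_apply1]
      rw [h0, h1]
      have hd0 : d ≠ 0 := by
        intro h; rw [h] at hle0; simp at hle0
      rw [if_neg hd0, sub_zero]
      have harith : (d 1 - i = i * (d 0 - 1)) ↔ (d 1 = i * d 0) := by
        obtain ⟨c, hc⟩ := Nat.exists_eq_add_of_le hle0
        rw [hc]
        have he : i * (1 + c) = i + i * c := by ring
        have he2' : 1 + c - 1 = c := by omega
        rw [he, he2']
        generalize i * c = t
        omega
      by_cases hcase : d 1 = i * d 0
      · rw [if_pos (harith.mpr hcase), if_pos hcase]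
      · rw [if_neg (fun hh => hcase (harith.mp hh)), if_neg hcase]
    · rw [if_neg hle, coeff_G2]
      rw [e2_le_iff] at hle
      push_neg at hle
      by_cases hd0 : 1 ≤ d 0
      · have hd1 : d 1 < i := hle hd0
        have hne : d 1 ≠ i * d 0 := by
          have hh : i ≤ i * d 0 := Nat.le_mul_of_pos_right i hd0
          omega
        have hdne : d ≠ 0 := by intro h; rw [h] at hd0; simp at hd0
        rw [if_neg hne, if_neg hdne, sub_zero]
      · have hd00 : d 0 = 0 := by omega
        by_cases hd1 : d 1 = 0
        · have hdz : d = 0 := by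
            have h := fin2_eq d; rw [hd00, hd1] at h
            simpa [e2] using h
          rw [if_pos hdz, hd00, hd1]
          simp
        · have hdne : d ≠ 0 := fun h => hd1 (by rw [h]; rfl)
          have hne : d 1 ≠ i * d 0 := by rw [hd00]; simpa using hd1
          rw [if_neg hne, if_neg hdne, sub_zero]
  calc G2 i * (1 - MvPowerSeries.X 0 * MvPowerSeries.X 1 ^ i)
      = G2 i - G2 i * (MvPowerSeries.X 0 * MvPowerSeries.X 1 ^ i) := by ring
    _ = G2 i - (G2 i - 1) := by rw [key]
    _ = 1 := by ring

lemma prod_inv (n : ℕ) :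
    (∏ i ∈ range n,
        (1 - (MvPowerSeries.X 0 : MvPowerSeries (Fin 2) ℚ) * MvPowerSeries.X 1 ^ i))⁻¹
      = ∏ i ∈ range n, G2 i := by
  rw [MvPowerSeries.inv_eq_iff_mul_eq_one]
  · rw [← Finset.prod_mul_distrib, Finset.prod_congr rfl (fun i _ => G2_mul i)]
    exact Finset.prod_const_one
  · rw [map_prod]
    have h : ∀ i ∈ range n,
        MvPowerSeries.constantCoeff (σ := Fin 2) (R := ℚ)
          (1 - MvPowerSeries.X 0 * MvPowerSeries.X 1 ^ i) = 1 := by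
      intro i _
      simp [map_sub, map_mul, map_pow]
    rw [Finset.prod_congr rfl h, Finset.prod_const_one]
    norm_num

/-- The model Finset for coefficients of `∏ G2 i`. -/
def Mfin (n k m : ℕ) : Finset (Fin n → ℕ) :=
  (Fintype.piFinset fun _ : Fin n => range (k+1)).filter
    fun b => (∑ i, b i) = k ∧ (∑ i : Fin n, (i:ℕ) * b i) = m

lemma mem_Mfin {n k m : ℕ} {b : Fin n → ℕ} :
    b ∈ Mfin n k m ↔ (∑ i, b i) = k ∧ (∑ i : Fin n, (i:ℕ) * b i) = m := by
  unfold Mfin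
  rw [mem_filter, and_iff_right_iff_imp]
  intro hcond
  rw [Fintype.mem_piFinset]
  intro i
  rw [mem_range]
  have h := Finset.single_le_sum (f := b) (fun j _ => Nat.zero_le _) (mem_univ i)
  omega

lemma sum_single_apply {n : ℕ} (v : Fin n → (Fin 2 →₀ ℕ)) (k : ℕ) :
    (∑ i : Fin n, Finsupp.single (i:ℕ) (v i)) k
      = if h : k < n then v ⟨k, h⟩ else 0 := by
  rw [Finset.sum_apply']
  split_ifs with h
  · rw [Finset.sum_eq_single (⟨k, h⟩ : Fin n)]
    · rw [Finsupp.single_apply, if_pos rfl]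
    · intro i _ hne
      rw [Finsupp.single_apply, if_neg]
      intro hh
      exact hne (Fin.ext hh)
    · intro habs; exact absurd (mem_univ _) habs
  · apply Finset.sum_eq_zero
    intro i _
    rw [Finsupp.single_apply, if_neg]
    intro hh
    have := i.isLt
    omega

lemma sum_single_const {n : ℕ} (c : Fin 2) (v : Fin n → ℕ) :
    (∑ i : Fin n, Finsupp.single c (v i)) = Finsupp.single c (∑ i, v i) := by
  ext t
  rw [Finset.sum_apply', Finsupp.single_apply]
  split_ifs with h
  · exact Finset.sum_congr rfl fun i _ => by rw [Finsupp.single_apply, if_pos h]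
  · exact Finset.sum_eq_zero fun i _ => by rw [Finsupp.single_apply, if_neg h]

lemma coeff_prodG (n : ℕ) (d : Fin 2 →₀ ℕ) :
    MvPowerSeries.coeff d (∏ i ∈ range n, G2 i) = ((Mfin n (d 0) (d 1)).card : ℚ) := by
  classical
  rw [MvPowerSeries.coeff_prod]
  have hterm : ∀ l : ℕ →₀ (Fin 2 →₀ ℕ),
      (∏ i ∈ range n, MvPowerSeries.coeff (l i) (G2 i))
        = if (∀ i ∈ range n, (l i) 1 = i * (l i) 0) then (1:ℚ) else 0 := by
    intro l
    rw [← Finset.prod_boole]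
    exact Finset.prod_congr rfl fun i _ => coeff_G2 i (l i)
  rw [Finset.sum_congr rfl fun l _ => hterm l, Finset.sum_boole]
  congr 1
  apply Finset.card_bij' (fun l _ => fun i : Fin n => l (i:ℕ) 0)
      (fun b _ => ∑ i : Fin n, Finsupp.single (i:ℕ) (e2 (b i) ((i:ℕ) * b i)))
  · -- hi : image lands in Mfin
    intro l hl
    rw [mem_filter, Finset.mem_finsuppAntidiag] at hl
    obtain ⟨⟨hsum, hsupp⟩, hP⟩ := hl
    rw [mem_Mfin]
    have h0 : (∑ i ∈ range n, l i) 0 = d 0 := by rw [hsum]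
    have h1 : (∑ i ∈ range n, l i) 1 = d 1 := by rw [hsum]
    rw [Finset.sum_apply'] at h0 h1
    constructor
    · rw [Fin.sum_univ_eq_sum_range (fun k => l k 0)]
      exact h0
    · rw [Fin.sum_univ_eq_sum_range (fun k => (k:ℕ) * l k 0)]
      rw [← h1]
      exact Finset.sum_congr rfl fun i hi => (hP i hi).symm
  · -- hj : inverse lands in the filtered antidiagonal
    intro b hb
    rw [mem_Mfin] at hb
    rw [mem_filter, Finset.mem_finsuppAntidiag]
    refine ⟨⟨?_, ?_⟩, ?_⟩
    · -- sum = d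
      have hconv : ∑ k ∈ range n,
            (∑ i : Fin n, Finsupp.single (i:ℕ) (e2 (b i) ((i:ℕ) * b i))) k
          = ∑ i : Fin n, e2 (b i) ((i:ℕ) * b i) := by
        rw [← Fin.sum_univ_eq_sum_range
          (fun k => (∑ i : Fin n, Finsupp.single (i:ℕ) (e2 (b i) ((i:ℕ) * b i))) k)]
        refine Finset.sum_congr rfl fun i _ => ?_
        rw [sum_single_apply, dif_pos i.isLt]
      rw [hconv]
      have he : ∑ i : Fin n, e2 (b i) ((i:ℕ) * b i)
          = e2 (∑ i, b i) (∑ i : Fin n, (i:ℕ) * b i) := by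
        unfold e2
        rw [Finset.sum_add_distrib, sum_single_const, sum_single_const]
      rw [he, hb.1, hb.2]
      exact (fin2_eq d).symm
    · -- support
      intro k hk
      rw [Finsupp.mem_support_iff] at hk
      rw [mem_range]
      by_contra hkn
      apply hk
      rw [sum_single_apply, dif_neg (by omega)]
    · -- the predicate
      intro k hk
      rw [mem_range] at hk
      rw [sum_single_apply, dif_pos hk, e2_apply0, e2_apply1]
  · -- left inverse
    intro l hl
    rw [mem_filter, Finset.mem_finsuppAntidiag] at hl
    obtain ⟨⟨hsum, hsupp⟩, hP⟩ := hl
    ext k s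
    rw [sum_single_apply]
    split_ifs with h
    · have hlk := hP k (mem_range.mpr h)
      conv_rhs => rw [fin2_eq (l k)]
      rw [hlk]
    · have : k ∉ l.support := fun hc => by
        have := mem_range.mp (hsupp hc); omega
      rw [Finsupp.notMem_support_iff] at this
      rw [this]
  · -- right inverse
    intro b hb
    funext i
    rw [sum_single_apply, dif_pos i.isLt]
    simp [e2_apply0]

end Aux3

/-- Proposition 3.10: for every `γ ∈ G(r,n)`,
`Σ_{f ∈ N_0^{(r,n)}, π(f)=γ} t^{max f} q^{n·max f − |f|} = t^{des_G γ} q^{maj γ} / (t;q)_n`,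
as formal power series in `t = X 0` and `q = X 1`. -/
theorem stmt4 (r n : ℕ) (hr : 0 < r) (γ : CPerm r n) :
    (seriesOf2 fun k m =>
        (({f : CSeq r n | ValidSeq f ∧ isPi f γ ∧ maxf f = k ∧ n * k - sumf f = m}).ncard : ℚ)) =
      (MvPowerSeries.X 0) ^ desG γ * (MvPowerSeries.X 1) ^ majG γ *
        (∏ i ∈ range n,
          (1 - (MvPowerSeries.X 0 : MvPowerSeries (Fin 2) ℚ) * (MvPowerSeries.X 1) ^ i))⁻¹ := by
  classical
  rw [prod_inv n, Xpow_mul_Xpow (desG γ) (majG γ)]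
  apply MvPowerSeries.ext
  intro d
  rw [MvPowerSeries.coeff_monomial_mul]
  have hL : MvPowerSeries.coeff d
      (seriesOf2 fun k m =>
        (({f : CSeq r n | ValidSeq f ∧ isPi f γ ∧ maxf f = k ∧ n * k - sumf f = m}).ncard : ℚ))
      = ((Bfin γ (d 0) (d 1)).card : ℚ) := by
    have h : MvPowerSeries.coeff d
        (seriesOf2 fun k m =>
          (({f : CSeq r n | ValidSeq f ∧ isPi f γ ∧ maxf f = k ∧ n * k - sumf f = m}).ncard : ℚ))
        = (({f : CSeq r n | ValidSeq f ∧ isPi f γ ∧ maxf f = d 0 ∧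
            n * d 0 - sumf f = d 1}).ncard : ℚ) := rfl
    rw [h, ncard_S γ (d 0) (d 1)]
  rw [hL]
  by_cases hle : e2 (desG γ) (majG γ) ≤ d
  · rw [if_pos hle, one_mul, coeff_prodG]
    rw [e2_le_iff] at hle
    obtain ⟨hle0, hle1⟩ := hle
    have h0 : (d - e2 (desG γ) (majG γ)) 0 = d 0 - desG γ := by
      rw [Finsupp.tsub_apply, e2_apply0]
    have h1 : (d - e2 (desG γ) (majG γ)) 1 = d 1 - majG γ := by
      rw [Finsupp.tsub_apply, e2_apply1]
    rw [h0, h1]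
    have heq : Bfin γ (d 0) (d 1) = Mfin n (d 0 - desG γ) (d 1 - majG γ) := by
      ext b
      rw [mem_Bfin, mem_Mfin]
      omega
    rw [heq]
  · rw [if_neg hle]
    rw [e2_le_iff] at hle
    have heq : Bfin γ (d 0) (d 1) = ∅ := by
      ext b
      rw [mem_Bfin]
      simp only [notMem_empty, iff_false]
      rintro ⟨h1, h2⟩
      exact hle ⟨by omega, by omega⟩
    rw [heq]
    simp


end Paper
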